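/- Let Ψ be a stationary point process on ℝ^d and assume there exist c_1 > 0 and δ > 0 such that P(‖τ(ℤ^d, Ψ, 0)‖ > r) ≤ c_1 exp(−r^δ / c_1) for all r ≥ 0. Then there exists c_3 > 0 such that for all r > 0 and all x ∈ ℝ^d, P(r < ‖τ(ℤ^d, Ψ ∪ {x}, x) − x‖ < ∞) ≤ c_3 exp(−r^δ / c_3). -/

import Mathlib

open MeasureTheory Set Metric
open scoped ENNReal ENat NNReal Pointwise

noncomputable section

/-- `ℝ^d`. -/
abbrev V (d : ℕ) := EuclideanSpace ℝ (Fin d)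

variable {d : ℕ}

/-- `x` is lexicographically strictly smaller than `y`. -/
def lexLT (x y : V d) : Prop := ∃ i : Fin d, x i < y i ∧ ∀ j : Fin d, j < i → x j = y j

/-- A point `p` of the first configuration prefers `x` to `y` (both in the second
configuration): closer, or at equal distance and lexicographically smaller. -/
def prefPhi (p x y : V d) : Prop :=
  dist x p < dist y p ∨ (dist x p = dist y p ∧ lexLT x y)

/-- A point `x` of the second configuration prefers `p` to `q` (both in the first
configuration): closer, or at equal distance and lexicographically greater. -/
def prefPsi (x p q : V d) : Prop :=
  dist p x < dist q x ∨ (dist p x = dist q x ∧ lexLT q p)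

/-- Preference over `Option` values: every point is preferred to `∞` (= `none`). -/
def prefPhiOpt (p x : V d) : Option (V d) → Prop
  | none => True
  | some y => prefPhi p x y

/-- Preference over `Option` values: every point is preferred to `∞` (= `none`). -/
def prefPsiOpt (x p : V d) : Option (V d) → Prop
  | none => True
  | some q => prefPsi x p q

/-- `p ∈ φ` and `x ∈ ψ` are mutually most preferred points of each other. -/
def MutualNN (φ ψ : Set (V d)) (p x : V d) : Prop :=
  p ∈ φ ∧ x ∈ ψ ∧ (∀ y ∈ ψ, y ≠ x → prefPhi p x y) ∧ (∀ q ∈ φ, q ≠ p → prefPsi x p q)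

/-- The pair `(φ_n, ψ_n)` of configurations of still unmatched points after `n` rounds of the
mutual nearest neighbour matching algorithm. -/
def stages (φ ψ : Set (V d)) : ℕ → Set (V d) × Set (V d)
  | 0 => (φ, ψ)
  | n + 1 =>
      let s := stages φ ψ n
      (s.1 \ {p | ∃ x, MutualNN s.1 s.2 p x}, s.2 \ {x | ∃ p, MutualNN s.1 s.2 p x})

/-- `φ_∞`, the set of points of `φ` never matched by the algorithm. -/
def phiInf (φ ψ : Set (V d)) : Set (V d) := ⋂ n, (stages φ ψ n).1

/-- `ψ_∞`, the set of points of `ψ` never matched by the algorithm. -/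
def psiInf (φ ψ : Set (V d)) : Set (V d) := ⋂ n, (stages φ ψ n).2

open Classical in
/-- The mutual nearest neighbour matching `τ(φ, ψ, ·)`; the value `none` represents `∞`,
points outside `φ ∪ ψ` are mapped to themselves. -/
def matchTau (φ ψ : Set (V d)) (z : V d) : Option (V d) :=
  if z ∈ φ then
    if h : ∃ x, ∃ n, MutualNN (stages φ ψ n).1 (stages φ ψ n).2 z x then some h.choose
    else none
  else if z ∈ ψ then
    if h : ∃ p, ∃ n, MutualNN (stages φ ψ n).1 (stages φ ψ n).2 p z then some h.choose
    else none
  else some z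

/-- A locally finite subset of `ℝ^d`. -/
def LocFinite (φ : Set (V d)) : Prop := ∀ r : ℝ, (φ ∩ closedBall 0 r).Finite

/-- `t` is a partial matching between `φ` and `ψ` (with `none` = unmatched). -/
def IsPartialMatching (φ ψ : Set (V d)) (t : V d → Option (V d)) : Prop :=
  (∀ p ∈ φ, ∀ x, t p = some x → x ∈ ψ) ∧ (∀ x ∈ ψ, ∀ p, t x = some p → p ∈ φ) ∧
  (∀ p ∈ φ, ∀ x ∈ ψ, (t p = some x ↔ t x = some p))

/-- `t` is a stable partial matching between `φ` and `ψ`: a partial matching admitting no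
unstable pair `(p, x)`, i.e. no pair where `x` prefers `p` to `t x` and `p` prefers `x`
to `t p`. -/
def IsStableMatching (φ ψ : Set (V d)) (t : V d → Option (V d)) : Prop :=
  IsPartialMatching φ ψ t ∧
  ¬ ∃ p ∈ φ, ∃ x ∈ ψ, prefPsiOpt x p (t x) ∧ prefPhiOpt p x (t p)

/-- `(z 0, …, z (n-1))`, `n ≥ 2`, is a descending chain in `(φ, ψ)`: points at even positions
belong to `φ`, points at odd positions to `ψ`, and every interior point prefers its successor
to its predecessor. (This corresponds to the 1-based chain `(z_1, …, z_n)` of the paper.) -/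
def DescChain (φ ψ : Set (V d)) (n : ℕ) (z : ℕ → V d) : Prop :=
  2 ≤ n ∧ (∀ i < n, if Even i then z i ∈ φ else z i ∈ ψ) ∧
    ∀ i, 1 ≤ i → i + 1 < n →
      (if Even i then prefPhi (z i) (z (i + 1)) (z (i - 1))
       else prefPsi (z i) (z (i + 1)) (z (i - 1)))

/-- Descending chain starting with a point of `ψ` (even positions in `ψ`, odd in `φ`). -/
def DescChainPsiStart (φ ψ : Set (V d)) (n : ℕ) (z : ℕ → V d) : Prop :=
  2 ≤ n ∧ (∀ i < n, if Even i then z i ∈ ψ else z i ∈ φ) ∧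
    ∀ i, 1 ≤ i → i + 1 < n →
      (if Even i then prefPsi (z i) (z (i + 1)) (z (i - 1))
       else prefPhi (z i) (z (i + 1)) (z (i - 1)))

/-- An infinite descending chain in `(φ, ψ)`. -/
def InfDescChain (φ ψ : Set (V d)) (z : ℕ → V d) : Prop :=
  (∀ i, if Even i then z i ∈ φ else z i ∈ ψ) ∧
    ∀ i, 1 ≤ i →
      (if Even i then prefPhi (z i) (z (i + 1)) (z (i - 1))
       else prefPsi (z i) (z (i + 1)) (z (i - 1)))

/-- The union of balls `F_c` associated with a chain `c` of length `n`:
`B(c 0, ‖c 1 − c 0‖) ∪ ⋃_{i=1}^{n-1} B(c i, ‖c i − c (i-1)‖)`. -/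
def chainBalls (n : ℕ) (c : ℕ → V d) : Set (V d) :=
  closedBall (c 0) (dist (c 1) (c 0)) ∪
    ⋃ i ∈ Finset.Ico 1 n, closedBall (c i) (dist (c i) (c (i - 1)))

open Classical in
/-- The matching flower `F(φ, ψ, z)` of a point `z`: all of `ℝ^d` if `z ∈ φ ∪ ψ` is unmatched,
`{z}` if `z ∉ φ ∪ ψ`, and otherwise the union of the ball sets of all competing chains for `z`,
i.e. descending chains starting at `z` whose second point is equal to, or preferred by `z` to,
the matching partner of `z`. -/
def flower (φ ψ : Set (V d)) (z : V d) : Set (V d) :=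
  if z ∈ φ then
    match matchTau φ ψ z with
    | none => Set.univ
    | some w =>
        ⋃ (n : ℕ) (c : ℕ → V d)
          (_ : DescChain φ ψ n c ∧ c 0 = z ∧ (c 1 = w ∨ prefPhi z (c 1) w)),
          chainBalls n c
  else if z ∈ ψ then
    match matchTau φ ψ z with
    | none => Set.univ
    | some w =>
        ⋃ (n : ℕ) (c : ℕ → V d)
          (_ : DescChainPsiStart φ ψ n c ∧ c 0 = z ∧ (c 1 = w ∨ prefPsi z (c 1) w)),
          chainBalls n c
  else {z}

/-- The lattice `ℤ^d` as a subset of `ℝ^d`. -/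
def lattice (d : ℕ) : Set (V d) := Set.range (fun k : Fin d → ℤ => (WithLp.toLp 2 (fun i => (k i : ℝ)) : V d))


/-- The point of `ℝ^d` with the given integer coordinates. -/
def intVec {d : ℕ} (k : Fin d → ℤ) : V d := WithLp.toLp 2 (fun i => (k i : ℝ))

/-- Translation of a configuration by a vector. -/
def shift (φ : Set (V d)) (x : V d) : Set (V d) := (· + x) '' φ

/-- The set of matched points of `ψ` in the mutual nearest neighbour matching of `φ`
with `ψ`. -/
def matchedPsi (φ ψ : Set (V d)) : Set (V d) := {x ∈ ψ | matchTau φ ψ x ≠ none}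

open Classical in
/-- The matching status `M(φ, ψ, z)`: `1` if `z` is matched, `0` otherwise. -/
def matchStatus (φ ψ : Set (V d)) (z : V d) : ℝ :=
  if ∃ w, matchTau φ ψ z = some w ∧ w ∈ φ ∪ ψ then 1 else 0

/-- The σ-field on configurations generated by the counting maps `φ ↦ #(φ ∩ B)`,
`B` Borel. -/
def configSA (d : ℕ) : MeasurableSpace (Set (V d)) :=
  MeasurableSpace.generateFrom
    {A | ∃ (B : Set (V d)) (n : ℕ), MeasurableSet B ∧ A = {φ | (φ ∩ B).encard = (n : ℕ∞)}}

/-- Measurability of a configuration-valued map with respect to the counting σ-field. -/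
def PPMeasurable {Ω : Type*} [MeasurableSpace Ω] (Φ : Ω → Set (V d)) : Prop :=
  ∀ A : Set (Set (V d)), MeasurableSet[configSA d] A → MeasurableSet (Φ ⁻¹' A)

/-- The closed unit cube `[0,1]^d`. -/
def cube01 (d : ℕ) : Set (V d) := {y | ∀ i, y i ∈ Set.Icc (0 : ℝ) 1}

/-- The half-open unit cube `[0,1)^d`. -/
def cube01' (d : ℕ) : Set (V d) := {y | ∀ i, y i ∈ Set.Ico (0 : ℝ) 1}

/-- `Ψ` is a point process: measurable (for the counting σ-field) and almost surely locally
finite. -/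
def IsPointProcess {Ω : Type*} [MeasurableSpace Ω] (P : Measure Ω) (Ψ : Ω → Set (V d)) : Prop :=
  PPMeasurable Ψ ∧ ∀ᵐ ω ∂P, LocFinite (Ψ ω)

/-- `Ψ` is a stationary point process: the distribution is invariant under all
translations. -/
def IsStationaryPP {Ω : Type*} [MeasurableSpace Ω] (P : Measure Ω) (Ψ : Ω → Set (V d)) : Prop :=
  IsPointProcess P Ψ ∧
    ∀ (x : V d) (A : Set (Set (V d))), MeasurableSet[configSA d] A →
      P {ω | shift (Ψ ω) x ∈ A} = P {ω | Ψ ω ∈ A}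

/-- `Ψ` has intensity `α`: the expected number of points in `[0,1]^d` equals `α`. -/
def HasIntensity {Ω : Type*} [MeasurableSpace Ω] (P : Measure Ω) (Ψ : Ω → Set (V d))
    (α : ℝ) : Prop :=
  ∫⁻ ω, ((Ψ ω ∩ cube01 d).encard : ℝ≥0∞) ∂P = ENNReal.ofReal α

/-- `Ψ` is a stationary Poisson process with intensity `α`: Poisson counts with mean
`α λ_d(B)` on every Borel set of finite volume, and independent counts on pairwise disjoint
Borel sets. -/
def IsPoissonPP {Ω : Type*} [MeasurableSpace Ω] (P : Measure Ω) (Ψ : Ω → Set (V d))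
    (α : ℝ) : Prop :=
  IsPointProcess P Ψ ∧
  (∀ B : Set (V d), MeasurableSet B → volume B < ⊤ → ∀ n : ℕ,
      P {ω | (Ψ ω ∩ B).encard = (n : ℕ∞)} =
        ENNReal.ofReal (Real.exp (-(α * (volume B).toReal)) *
          (α * (volume B).toReal) ^ n / n.factorial)) ∧
  (∀ (k : ℕ) (B : Fin k → Set (V d)), (∀ i, MeasurableSet (B i)) →
      Pairwise (Function.onFun Disjoint B) →
      ∀ n : Fin k → ℕ,
        P {ω | ∀ i, (Ψ ω ∩ B i).encard = (n i : ℕ∞)} =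
          ∏ i, P {ω | (Ψ ω ∩ B i).encard = (n i : ℕ∞)})

/-- `Ψ` has `n`-th correlation function `ρ`: for every measurable `f ≥ 0`, the expected sum of
`f` over `n`-tuples of pairwise distinct points of `Ψ` equals `∫ f ρ`. -/
def HasCorrelationFunction {Ω : Type*} [MeasurableSpace Ω] (P : Measure Ω)
    (Ψ : Ω → Set (V d)) (n : ℕ) (ρ : (Fin n → V d) → ℝ≥0∞) : Prop :=
  Measurable ρ ∧
    ∀ f : (Fin n → V d) → ℝ≥0∞, Measurable f →
      ∫⁻ ω, ∑' t : {t : Fin n → V d // (∀ i, t i ∈ Ψ ω) ∧ Function.Injective t}, f t ∂P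
        = ∫⁻ x, f x * ρ x ∂(volume : Measure (Fin n → V d))

/-- The `α_{p,q}(s)` mixing coefficient of a point process: supremum of covariances of
`{0,1}`-valued functionals of the restrictions of `Ψ` to sets `A`, `B` of volume at most
`p` resp. `q` and mutual distance at least `s`. -/
def mixingCoef {Ω : Type*} [MeasurableSpace Ω] (P : Measure Ω) (Ψ : Ω → Set (V d))
    (p q s : ℝ) : ℝ :=
  sSup {v : ℝ | ∃ (S T : Set (Set (V d))) (A B : Set (V d)),
    MeasurableSet[configSA d] S ∧ MeasurableSet[configSA d] T ∧
    MeasurableSet A ∧ MeasurableSet B ∧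
    volume A ≤ ENNReal.ofReal p ∧ volume B ≤ ENNReal.ofReal q ∧
    (∀ a ∈ A, ∀ b ∈ B, s ≤ dist a b) ∧
    v = |(P {ω | Ψ ω ∩ A ∈ S ∧ Ψ ω ∩ B ∈ T}).toReal -
          (P {ω | Ψ ω ∩ A ∈ S}).toReal * (P {ω | Ψ ω ∩ B ∈ T}).toReal|}

section Combinatorics

variable {d : ℕ} {φ ψ : Set (V d)}

lemma lexLT_irrefl (x : V d) : ¬ lexLT x x := by
  rintro ⟨i, hi, -⟩; exact lt_irrefl _ hi

lemma lexLT_asymm {x y : V d} (h : lexLT x y) (h' : lexLT y x) : False := by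
  obtain ⟨i, hi, hij⟩ := h
  obtain ⟨k, hk, hkl⟩ := h'
  rcases lt_trichotomy i k with hik | rfl | hki
  · have := hkl i hik; rw [this] at hi; exact lt_irrefl _ hi
  · exact lt_irrefl _ (hi.trans hk)
  · have := hij k hki; rw [this] at hk; exact lt_irrefl _ hk

lemma prefPhi_irrefl (p x : V d) : ¬ prefPhi p x x := by
  rintro (h | ⟨-, h⟩)
  · exact lt_irrefl _ h
  · exact lexLT_irrefl _ h

lemma prefPhi_asymm {p x y : V d} (h : prefPhi p x y) (h' : prefPhi p y x) : False := by
  rcases h with h | ⟨e, l⟩ <;> rcases h' with h' | ⟨e', l'⟩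
  · exact lt_irrefl _ (h.trans h')
  · rw [e'] at h; exact lt_irrefl _ h
  · rw [e] at h'; exact lt_irrefl _ h'
  · exact lexLT_asymm l l'

lemma prefPsi_asymm {x p q : V d} (h : prefPsi x p q) (h' : prefPsi x q p) : False := by
  rcases h with h | ⟨e, l⟩ <;> rcases h' with h' | ⟨e', l'⟩
  · exact lt_irrefl _ (h.trans h')
  · rw [e'] at h; exact lt_irrefl _ h
  · rw [e] at h'; exact lt_irrefl _ h'
  · exact lexLT_asymm l l'

lemma prefPhi_ne {p x y : V d} (h : prefPhi p x y) : x ≠ y := by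
  rintro rfl; exact prefPhi_irrefl _ _ h

lemma stages_succ_fst (n : ℕ) :
    (stages φ ψ (n + 1)).1 = (stages φ ψ n).1 \
      {p | ∃ x, MutualNN (stages φ ψ n).1 (stages φ ψ n).2 p x} := rfl

lemma stages_succ_snd (n : ℕ) :
    (stages φ ψ (n + 1)).2 = (stages φ ψ n).2 \
      {x | ∃ p, MutualNN (stages φ ψ n).1 (stages φ ψ n).2 p x} := rfl

lemma stages_fst_subset (n : ℕ) : (stages φ ψ n).1 ⊆ φ := by
  induction n with
  | zero => exact subset_rfl
  | succ n ih => rw [stages_succ_fst]; exact Set.diff_subset.trans ih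

lemma stages_snd_subset (n : ℕ) : (stages φ ψ n).2 ⊆ ψ := by
  induction n with
  | zero => exact subset_rfl
  | succ n ih => rw [stages_succ_snd]; exact Set.diff_subset.trans ih

lemma stages_fst_mono {m n : ℕ} (h : m ≤ n) : (stages φ ψ n).1 ⊆ (stages φ ψ m).1 := by
  induction n with
  | zero => rw [Nat.le_zero.mp h]
  | succ n ih =>
    rcases Nat.lt_or_ge m (n + 1) with h' | h'
    · rw [stages_succ_fst]; exact Set.diff_subset.trans (ih (Nat.lt_succ_iff.mp h'))
    · rw [le_antisymm h h']

lemma stages_snd_mono {m n : ℕ} (h : m ≤ n) : (stages φ ψ n).2 ⊆ (stages φ ψ m).2 := by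
  induction n with
  | zero => rw [Nat.le_zero.mp h]
  | succ n ih =>
    rcases Nat.lt_or_ge m (n + 1) with h' | h'
    · rw [stages_succ_snd]; exact Set.diff_subset.trans (ih (Nat.lt_succ_iff.mp h'))
    · rw [le_antisymm h h']

lemma not_mem_fst_succ {n : ℕ} {p x : V d}
    (h : MutualNN (stages φ ψ n).1 (stages φ ψ n).2 p x) : p ∉ (stages φ ψ (n + 1)).1 := by
  rw [stages_succ_fst]; exact fun hp => hp.2 ⟨x, h⟩

lemma not_mem_snd_succ {n : ℕ} {p x : V d}
    (h : MutualNN (stages φ ψ n).1 (stages φ ψ n).2 p x) : x ∉ (stages φ ψ (n + 1)).2 := by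
  rw [stages_succ_snd]; exact fun hx => hx.2 ⟨p, h⟩

lemma removed_fst {n : ℕ} {p : V d} (hp : p ∈ φ) (h : p ∉ (stages φ ψ n).1) :
    ∃ m < n, ∃ x, MutualNN (stages φ ψ m).1 (stages φ ψ m).2 p x := by
  induction n with
  | zero => exact absurd hp h
  | succ n ih =>
    by_cases hn : p ∈ (stages φ ψ n).1
    · refine ⟨n, Nat.lt_succ_self n, ?_⟩
      by_contra hc
      rw [stages_succ_fst] at h
      exact h ⟨hn, hc⟩
    · obtain ⟨m, hm, hx⟩ := ih hn
      exact ⟨m, hm.trans (Nat.lt_succ_self n), hx⟩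

lemma removed_snd {n : ℕ} {x : V d} (hx : x ∈ ψ) (h : x ∉ (stages φ ψ n).2) :
    ∃ m < n, ∃ p, MutualNN (stages φ ψ m).1 (stages φ ψ m).2 p x := by
  induction n with
  | zero => exact absurd hx h
  | succ n ih =>
    by_cases hn : x ∈ (stages φ ψ n).2
    · refine ⟨n, Nat.lt_succ_self n, ?_⟩
      by_contra hc
      rw [stages_succ_snd] at h
      exact h ⟨hn, hc⟩
    · obtain ⟨m, hm, hp⟩ := ih hn
      exact ⟨m, hm.trans (Nat.lt_succ_self n), hp⟩

lemma mutualNN_right_unique {n m : ℕ} {p x y : V d}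
    (h1 : MutualNN (stages φ ψ n).1 (stages φ ψ n).2 p x)
    (h2 : MutualNN (stages φ ψ m).1 (stages φ ψ m).2 p y) : x = y := by
  rcases lt_trichotomy n m with h | rfl | h
  · exact absurd (stages_fst_mono (Nat.succ_le_of_lt h) h2.1) (not_mem_fst_succ h1)
  · by_contra hxy
    exact prefPhi_asymm (h1.2.2.1 y h2.2.1 (Ne.symm hxy)) (h2.2.2.1 x h1.2.1 hxy)
  · exact absurd (stages_fst_mono (Nat.succ_le_of_lt h) h1.1) (not_mem_fst_succ h2)

lemma mutualNN_left_unique {n m : ℕ} {p q x : V d}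
    (h1 : MutualNN (stages φ ψ n).1 (stages φ ψ n).2 p x)
    (h2 : MutualNN (stages φ ψ m).1 (stages φ ψ m).2 q x) : p = q := by
  rcases lt_trichotomy n m with h | rfl | h
  · exact absurd (stages_snd_mono (Nat.succ_le_of_lt h) h2.2.1) (not_mem_snd_succ h1)
  · by_contra hpq
    exact prefPsi_asymm (h1.2.2.2 q h2.1 (Ne.symm hpq)) (h2.2.2.2 p h1.1 hpq)
  · exact absurd (stages_snd_mono (Nat.succ_le_of_lt h) h1.2.1) (not_mem_snd_succ h2)

lemma matchTau_phi_eq {n : ℕ} {z x : V d} (hz : z ∈ φ)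
    (h : MutualNN (stages φ ψ n).1 (stages φ ψ n).2 z x) : matchTau φ ψ z = some x := by
  have hex : ∃ x, ∃ n, MutualNN (stages φ ψ n).1 (stages φ ψ n).2 z x := ⟨x, n, h⟩
  unfold matchTau
  rw [if_pos hz, dif_pos hex]
  obtain ⟨m, hm⟩ := hex.choose_spec
  exact congrArg some (mutualNN_right_unique hm h)

lemma matchTau_phi_some {z w : V d} (hz : z ∈ φ) (h : matchTau φ ψ z = some w) :
    ∃ n, MutualNN (stages φ ψ n).1 (stages φ ψ n).2 z w := by
  unfold matchTau at h
  rw [if_pos hz] at h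
  by_cases hex : ∃ x, ∃ n, MutualNN (stages φ ψ n).1 (stages φ ψ n).2 z x
  · rw [dif_pos hex] at h
    obtain ⟨m, hm⟩ := hex.choose_spec
    rw [Option.some.inj h] at hm; exact ⟨m, hm⟩
  · rw [dif_neg hex] at h; exact absurd h (by simp)

lemma matchTau_psi_eq {n : ℕ} {z p : V d} (hzφ : z ∉ φ) (hz : z ∈ ψ)
    (h : MutualNN (stages φ ψ n).1 (stages φ ψ n).2 p z) : matchTau φ ψ z = some p := by
  have hex : ∃ p, ∃ n, MutualNN (stages φ ψ n).1 (stages φ ψ n).2 p z := ⟨p, n, h⟩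
  unfold matchTau
  rw [if_neg hzφ, if_pos hz, dif_pos hex]
  obtain ⟨m, hm⟩ := hex.choose_spec
  exact congrArg some (mutualNN_left_unique hm h)

lemma matchTau_psi_some {z p : V d} (hzφ : z ∉ φ) (hz : z ∈ ψ)
    (h : matchTau φ ψ z = some p) :
    ∃ n, MutualNN (stages φ ψ n).1 (stages φ ψ n).2 p z := by
  unfold matchTau at h
  rw [if_neg hzφ, if_pos hz] at h
  by_cases hex : ∃ p, ∃ n, MutualNN (stages φ ψ n).1 (stages φ ψ n).2 p z
  · rw [dif_pos hex] at h
    obtain ⟨m, hm⟩ := hex.choose_spec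
    rw [Option.some.inj h] at hm; exact ⟨m, hm⟩
  · rw [dif_neg hex] at h; exact absurd h (by simp)

lemma matchTau_symm {x p : V d} (hxφ : x ∉ φ) (hx : x ∈ ψ)
    (h : matchTau φ ψ x = some p) : matchTau φ ψ p = some x := by
  obtain ⟨n, hn⟩ := matchTau_psi_some hxφ hx h
  exact matchTau_phi_eq (stages_fst_subset n hn.1) hn

lemma matchTau_self {x : V d} (hxφ : x ∈ φ) (hxψ : x ∈ ψ) : matchTau φ ψ x = some x := by
  refine matchTau_phi_eq (n := 0) hxφ ⟨hxφ, hxψ, ?_, ?_⟩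
  · intro y hy hne
    exact Or.inl (by rw [dist_self]; exact dist_pos.mpr hne)
  · intro q hq hne
    exact Or.inl (by rw [dist_self]; exact dist_pos.mpr hne)

lemma key_walk {x : V d} (hxψ : x ∉ ψ) :
    ∀ b a (q w z' : V d),
      MutualNN (stages φ ψ a).1 (stages φ ψ a).2 q w →
      MutualNN (stages φ (insert x ψ) b).1 (stages φ (insert x ψ) b).2 q z' →
      prefPhi q w z' → False := by
  intro b
  induction b using Nat.strong_induction_on with
  | _ b ih =>
    intro a q w z' hτ hτ' hpref
    have hwψ : w ∈ ψ := stages_snd_subset a hτ.2.1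
    have hwψ' : w ∈ insert x ψ := Set.mem_insert_of_mem _ hwψ
    have hwz' : w ≠ z' := prefPhi_ne hpref
    have hw_not : w ∉ (stages φ (insert x ψ) b).2 := fun hmem =>
      prefPhi_asymm hpref (hτ'.2.2.1 w hmem hwz')
    obtain ⟨b', hb', q₂, hq₂⟩ := removed_snd hwψ' hw_not
    have hqb' : q ∈ (stages φ (insert x ψ) b').1 := stages_fst_mono (le_of_lt hb') hτ'.1
    have hq₂q : q₂ ≠ q := by
      rintro rfl
      exact absurd (stages_fst_mono (Nat.succ_le_of_lt hb') hτ'.1) (not_mem_fst_succ hq₂)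
    have hpsi : prefPsi w q₂ q := hq₂.2.2.2 q hqb' (Ne.symm hq₂q)
    have hq₂φ : q₂ ∈ φ := stages_fst_subset b' hq₂.1
    have hq₂_not : q₂ ∉ (stages φ ψ a).1 := fun hmem =>
      prefPsi_asymm hpsi (hτ.2.2.2 q₂ hmem hq₂q)
    obtain ⟨a', ha', w₂, hw₂⟩ := removed_fst hq₂φ hq₂_not
    have hwa' : w ∈ (stages φ ψ a').2 := stages_snd_mono (le_of_lt ha') hτ.2.1
    have hw₂w : w₂ ≠ w := by
      rintro rfl
      exact absurd (stages_snd_mono (Nat.succ_le_of_lt ha') hτ.2.1) (not_mem_snd_succ hw₂)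
    have hphi : prefPhi q₂ w₂ w := hw₂.2.2.1 w hwa' (Ne.symm hw₂w)
    exact ih b' hb' a' q₂ w₂ w hw₂ hq₂ hphi

/-- Monotonicity: if the extra point `x` is matched to `p`, then in the matching without
`x` the point `p` is matched at least as far away (or unmatched). -/
lemma matchTau_mono {x p : V d} (hxφ : x ∉ φ)
    (h : matchTau φ (insert x ψ) x = some p) :
    p ∈ φ ∧ ∀ z, matchTau φ ψ p = some z → dist x p ≤ dist z p := by
  by_cases hxψ : x ∈ ψ
  · rw [Set.insert_eq_self.mpr hxψ] at h
    obtain ⟨n, hn⟩ := matchTau_psi_some hxφ hxψ h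
    have hp := matchTau_symm hxφ hxψ h
    refine ⟨stages_fst_subset n hn.1, ?_⟩
    intro z hz
    rw [hp] at hz
    rw [← Option.some.inj hz]
  · have hxψ' : x ∈ insert x ψ := Set.mem_insert _ _
    obtain ⟨b, hb⟩ := matchTau_psi_some hxφ hxψ' h
    refine ⟨stages_fst_subset b hb.1, ?_⟩
    intro z hz
    by_contra hlt
    push_neg at hlt
    have hpφ : p ∈ φ := stages_fst_subset b hb.1
    obtain ⟨a, ha⟩ := matchTau_phi_some hpφ hz
    exact key_walk hxψ b a p z x ha hb (Or.inl hlt)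

end Combinatorics
section Equivariance

variable {d : ℕ} {φ ψ : Set (V d)}

lemma lexLT_shift {x y : V d} (v : V d) : lexLT (x + v) (y + v) ↔ lexLT x y := by
  constructor
  · rintro ⟨i, hi, hj⟩
    refine ⟨i, ?_, fun j hj' => ?_⟩
    · simp only [PiLp.add_apply] at hi; exact lt_of_add_lt_add_right hi
    · have := hj j hj'; simp only [PiLp.add_apply] at this; exact add_right_cancel this
  · rintro ⟨i, hi, hj⟩
    refine ⟨i, ?_, fun j hj' => ?_⟩
    · simp only [PiLp.add_apply]; exact add_lt_add_of_lt_of_le hi le_rfl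
    · simp only [PiLp.add_apply, hj j hj']

lemma prefPhi_shift {p x y : V d} (v : V d) :
    prefPhi (p + v) (x + v) (y + v) ↔ prefPhi p x y := by
  simp only [prefPhi, dist_add_right, lexLT_shift]

lemma prefPsi_shift {x p q : V d} (v : V d) :
    prefPsi (x + v) (p + v) (q + v) ↔ prefPsi x p q := by
  simp only [prefPsi, dist_add_right, lexLT_shift]

lemma mem_shift {a : V d} (v : V d) (s : Set (V d)) : a + v ∈ shift s v ↔ a ∈ s := by
  unfold shift
  constructor
  · rintro ⟨b, hb, hba⟩
    rwa [← add_left_injective v hba]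
  · intro h; exact ⟨a, h, rfl⟩

lemma mem_shift' {a : V d} (v : V d) (s : Set (V d)) (h : a ∈ shift s v) :
    ∃ b ∈ s, a = b + v := by
  obtain ⟨b, hb, hba⟩ := h; exact ⟨b, hb, hba.symm⟩

lemma mutualNN_shift {A B : Set (V d)} {p x : V d} (v : V d) :
    MutualNN (shift A v) (shift B v) (p + v) (x + v) ↔ MutualNN A B p x := by
  constructor
  · rintro ⟨h1, h2, h3, h4⟩
    refine ⟨(mem_shift v A).mp h1, (mem_shift v B).mp h2, fun y hy hne => ?_,
      fun q hq hne => ?_⟩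
    · have := h3 (y + v) ((mem_shift v B).mpr hy) (fun he => hne (add_left_injective v he))
      exact (prefPhi_shift v).mp this
    · have := h4 (q + v) ((mem_shift v A).mpr hq) (fun he => hne (add_left_injective v he))
      exact (prefPsi_shift v).mp this
  · rintro ⟨h1, h2, h3, h4⟩
    refine ⟨(mem_shift v A).mpr h1, (mem_shift v B).mpr h2, fun y hy hne => ?_,
      fun q hq hne => ?_⟩
    · obtain ⟨y₀, hy₀, rfl⟩ := mem_shift' v B hy
      exact (prefPhi_shift v).mpr (h3 y₀ hy₀ (fun he => hne (congrArg (· + v) he)))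
    · obtain ⟨q₀, hq₀, rfl⟩ := mem_shift' v A hq
      exact (prefPsi_shift v).mpr (h4 q₀ hq₀ (fun he => hne (congrArg (· + v) he)))

lemma stages_shift (v : V d) (n : ℕ) :
    stages (shift φ v) (shift ψ v) n =
      (shift (stages φ ψ n).1 v, shift (stages φ ψ n).2 v) := by
  induction n with
  | zero => rfl
  | succ n ih =>
    have hmatched1 : (· + v) '' {p | ∃ x, MutualNN (stages φ ψ n).1 (stages φ ψ n).2 p x} =
        {p | ∃ x, MutualNN (shift (stages φ ψ n).1 v) (shift (stages φ ψ n).2 v) p x} := by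
      ext p'
      constructor
      · rintro ⟨p, ⟨x, hx⟩, rfl⟩
        exact ⟨x + v, (mutualNN_shift v).mpr hx⟩
      · rintro ⟨x', hx'⟩
        obtain ⟨p, hp, rfl⟩ := mem_shift' v _ hx'.1
        obtain ⟨x, hx, rfl⟩ := mem_shift' v _ hx'.2.1
        exact ⟨p, ⟨x, (mutualNN_shift v).mp hx'⟩, rfl⟩
    have hmatched2 : (· + v) '' {x | ∃ p, MutualNN (stages φ ψ n).1 (stages φ ψ n).2 p x} =
        {x | ∃ p, MutualNN (shift (stages φ ψ n).1 v) (shift (stages φ ψ n).2 v) p x} := by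
      ext x'
      constructor
      · rintro ⟨x, ⟨p, hp⟩, rfl⟩
        exact ⟨p + v, (mutualNN_shift v).mpr hp⟩
      · rintro ⟨p', hp'⟩
        obtain ⟨p, hp, rfl⟩ := mem_shift' v _ hp'.1
        obtain ⟨x, hx, rfl⟩ := mem_shift' v _ hp'.2.1
        exact ⟨x, ⟨p, (mutualNN_shift v).mp hp'⟩, rfl⟩
    have e1 := stages_succ_fst (φ := shift φ v) (ψ := shift ψ v) n
    have e2 := stages_succ_snd (φ := shift φ v) (ψ := shift ψ v) n
    rw [ih] at e1 e2
    apply Prod.ext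
    · rw [e1, stages_succ_fst, ← hmatched1]
      exact (Set.image_diff (add_left_injective v) _ _).symm
    · rw [e2, stages_succ_snd, ← hmatched2]
      exact (Set.image_diff (add_left_injective v) _ _).symm

lemma matchTau_shift (v : V d) (z : V d) :
    matchTau (shift φ v) (shift ψ v) (z + v) = Option.map (· + v) (matchTau φ ψ z) := by
  by_cases hzφ : z ∈ φ
  · have hzφ' : z + v ∈ shift φ v := (mem_shift v φ).mpr hzφ
    by_cases hex : ∃ x, ∃ n, MutualNN (stages φ ψ n).1 (stages φ ψ n).2 z x
    · obtain ⟨x, n, hn⟩ := hex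
      have h1 : matchTau φ ψ z = some x := matchTau_phi_eq hzφ hn
      have hn' : MutualNN (stages (shift φ v) (shift ψ v) n).1
          (stages (shift φ v) (shift ψ v) n).2 (z + v) (x + v) := by
        rw [stages_shift]; exact (mutualNN_shift v).mpr hn
      rw [h1, matchTau_phi_eq hzφ' hn']; rfl
    · have hex' : ¬ ∃ x, ∃ n, MutualNN (stages (shift φ v) (shift ψ v) n).1
          (stages (shift φ v) (shift ψ v) n).2 (z + v) x := by
        rintro ⟨x', n, hn'⟩
        rw [stages_shift] at hn'
        obtain ⟨x, hx, rfl⟩ := mem_shift' v _ hn'.2.1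
        exact hex ⟨x, n, (mutualNN_shift v).mp hn'⟩
      unfold matchTau
      rw [if_pos hzφ, if_pos hzφ', dif_neg hex, dif_neg hex']; rfl
  · have hzφ' : z + v ∉ shift φ v := fun h => by
      obtain ⟨b, hb, hba⟩ := mem_shift' v _ h
      rw [add_left_injective v hba] at hzφ; exact hzφ hb
    by_cases hzψ : z ∈ ψ
    · have hzψ' : z + v ∈ shift ψ v := (mem_shift v ψ).mpr hzψ
      by_cases hex : ∃ p, ∃ n, MutualNN (stages φ ψ n).1 (stages φ ψ n).2 p z
      · obtain ⟨p, n, hn⟩ := hex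
        have h1 : matchTau φ ψ z = some p := matchTau_psi_eq hzφ hzψ hn
        have hn' : MutualNN (stages (shift φ v) (shift ψ v) n).1
            (stages (shift φ v) (shift ψ v) n).2 (p + v) (z + v) := by
          rw [stages_shift]; exact (mutualNN_shift v).mpr hn
        rw [h1, matchTau_psi_eq hzφ' hzψ' hn']; rfl
      · have hex' : ¬ ∃ p, ∃ n, MutualNN (stages (shift φ v) (shift ψ v) n).1
            (stages (shift φ v) (shift ψ v) n).2 p (z + v) := by
          rintro ⟨p', n, hn'⟩
          rw [stages_shift] at hn'
          obtain ⟨p, hp, rfl⟩ := mem_shift' v _ hn'.1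
          exact hex ⟨p, n, (mutualNN_shift v).mp hn'⟩
        unfold matchTau
        rw [if_neg hzφ, if_neg hzφ', if_pos hzψ, if_pos hzψ', dif_neg hex, dif_neg hex']
        rfl
    · have hzψ' : z + v ∉ shift ψ v := fun h => by
        obtain ⟨b, hb, hba⟩ := mem_shift' v _ h
        rw [add_left_injective v hba] at hzψ; exact hzψ hb
      unfold matchTau
      rw [if_neg hzφ, if_neg hzφ', if_neg hzψ, if_neg hzψ']; rfl

lemma intVec_add (k m : Fin d → ℤ) : intVec (k + m) = intVec k + intVec m := by
  ext i
  simp [intVec, PiLp.add_apply]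

lemma intVec_mem_lattice (k : Fin d → ℤ) : intVec k ∈ lattice d := ⟨k, rfl⟩

lemma lattice_eq_range : lattice d = Set.range (intVec (d := d)) := rfl

lemma lattice_shift (m : Fin d → ℤ) : shift (lattice d) (intVec m) = lattice d := by
  ext a
  constructor
  · rintro ⟨b, ⟨k, rfl⟩, rfl⟩
    refine ⟨k + m, ?_⟩
    show intVec (k + m) = intVec k + intVec m
    exact intVec_add k m
  · rintro ⟨k, rfl⟩
    refine ⟨intVec (k - m), ⟨k - m, rfl⟩, ?_⟩
    show intVec (k - m) + intVec m = intVec k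
    rw [← intVec_add, sub_add_cancel]

lemma locFinite_shift (v : V d) (h : LocFinite ψ) : LocFinite (shift ψ v) := by
  intro r
  have hsub : shift ψ v ∩ closedBall 0 r ⊆ (· + v) '' (ψ ∩ closedBall 0 (r + ‖v‖)) := by
    rintro a ⟨⟨b, hb, rfl⟩, hball⟩
    refine ⟨b, ⟨hb, ?_⟩, rfl⟩
    simp only [mem_closedBall, dist_zero_right] at hball ⊢
    calc ‖b‖ = ‖b + v - v‖ := by rw [add_sub_cancel_right]
    _ ≤ ‖b + v‖ + ‖v‖ := norm_sub_le _ _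
    _ ≤ r + ‖v‖ := by linarith
  exact ((h (r + ‖v‖)).image _).subset hsub

end Equivariance
section Measurability

variable {d : ℕ}

/-- Type synonym for configurations, carrying the counting σ-algebra. -/
def Config (d : ℕ) := Set (V d)

instance : MeasurableSpace (Config d) := configSA d

/-- The underlying set of a configuration. -/
def toSet (ψ : Config d) : Set (V d) := ψ

lemma meas_count {B : Set (V d)} (hB : MeasurableSet B) (n : ℕ) :
    MeasurableSet {ψ : Config d | (toSet ψ ∩ B).encard = (n : ℕ∞)} :=
  MeasurableSpace.measurableSet_generateFrom ⟨B, n, hB, rfl⟩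

/-- Rational ball. -/
def rball (b : (Fin d → ℚ) × ℚ) : Set (V d) :=
  Metric.ball (WithLp.toLp 2 (fun i => ((b.1 i : ℝ))) : V d) (b.2 : ℝ)

lemma rball_measurableSet (b : (Fin d → ℚ) × ℚ) : MeasurableSet (rball (d := d) b) :=
  measurableSet_ball

open Classical in
/-- The unique point of `ψ` in the rational ball `b`, if it exists; junk value `0` else. -/
def ptMap (b : (Fin d → ℚ) × ℚ) (ψ : Config d) : V d :=
  if h : (toSet ψ ∩ rball b).encard = 1 then (Set.encard_eq_one.mp h).choose else 0

lemma ptMap_spec {b : (Fin d → ℚ) × ℚ} {ψ : Config d}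
    (h : (toSet ψ ∩ rball b).encard = 1) : toSet ψ ∩ rball b = {ptMap b ψ} := by
  rw [ptMap, dif_pos h]
  exact (Set.encard_eq_one.mp h).choose_spec

lemma ptMap_mem {b : (Fin d → ℚ) × ℚ} {ψ : Config d}
    (h : (toSet ψ ∩ rball b).encard = 1) : ptMap b ψ ∈ toSet ψ ∩ rball b := by
  rw [ptMap_spec h]; rfl

lemma measurable_ptMap (b : (Fin d → ℚ) × ℚ) : Measurable (ptMap (d := d) b) := by
  intro E hE
  by_cases h0 : (0 : V d) ∈ E
  · have he : ptMap b ⁻¹' E =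
        {ψ : Config d | (toSet ψ ∩ (rball b ∩ E)).encard = 1} ∪
          {ψ : Config d | (toSet ψ ∩ rball b).encard = 1}ᶜ := by
      ext ψ
      simp only [Set.mem_preimage, Set.mem_union, Set.mem_setOf_eq, Set.mem_compl_iff]
      by_cases h : (toSet ψ ∩ rball b).encard = 1
      · have hs := ptMap_spec h
        constructor
        · intro hmem
          left
          rw [← Set.inter_assoc, hs]
          rw [Set.inter_eq_self_of_subset_left (Set.singleton_subset_iff.mpr hmem)]
          exact Set.encard_singleton _
        · rintro (h1 | h2)
          · rw [← Set.inter_assoc, hs] at h1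
            rcases Set.encard_eq_one.mp h1 with ⟨a, ha⟩
            have hmem : a ∈ ({ptMap b ψ} : Set (V d)) ∩ E := by rw [ha]; exact rfl
            have hae : a = ptMap b ψ := hmem.1
            rw [← hae]; exact hmem.2
          · exact absurd h h2
      · rw [ptMap, dif_neg h]
        constructor
        · intro _; right; exact h
        · intro _; exact h0
    rw [he]
    exact ((meas_count ((rball_measurableSet b).inter hE) 1)).union
      (meas_count (rball_measurableSet b) 1).compl
  · have he : ptMap b ⁻¹' E =
        {ψ : Config d | (toSet ψ ∩ rball b).encard = 1} ∩
          {ψ : Config d | (toSet ψ ∩ (rball b ∩ E)).encard = 1} := by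
      ext ψ
      simp only [Set.mem_preimage, Set.mem_inter_iff, Set.mem_setOf_eq]
      by_cases h : (toSet ψ ∩ rball b).encard = 1
      · have hs := ptMap_spec h
        constructor
        · intro hmem
          refine ⟨h, ?_⟩
          rw [← Set.inter_assoc, hs,
            Set.inter_eq_self_of_subset_left (Set.singleton_subset_iff.mpr hmem)]
          exact Set.encard_singleton _
        · rintro ⟨-, h1⟩
          rw [← Set.inter_assoc, hs] at h1
          rcases Set.encard_eq_one.mp h1 with ⟨a, ha⟩
          have ha' : a ∈ ({ptMap b ψ} : Set (V d)) ∩ E := by rw [ha]; exact rfl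
          have hae : a = ptMap b ψ := ha'.1
          rw [← hae]; exact ha'.2
      · rw [ptMap, dif_neg h]
        exact ⟨fun hmem => absurd hmem h0, fun hmem => absurd hmem.1 h⟩
    rw [he]
    exact (meas_count (rball_measurableSet b) 1).inter
      (meas_count ((rball_measurableSet b).inter hE) 1)

/-- The set of locally finite configurations. -/
def LFset (d : ℕ) : Set (Config d) := {ψ | LocFinite (toSet ψ)}

lemma meas_LFset : MeasurableSet (LFset d) := by
  have he : LFset d = ⋂ m : ℕ, ⋃ j : ℕ,
      {ψ : Config d | (toSet ψ ∩ closedBall 0 (m : ℝ)).encard = (j : ℕ∞)} := by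
    ext ψ
    simp only [LFset, Set.mem_setOf_eq, Set.mem_iInter, Set.mem_iUnion]
    constructor
    · intro h m
      exact ⟨(h (m : ℝ)).toFinset.card, (h (m : ℝ)).encard_eq_coe_toFinset_card⟩
    · intro h r
      obtain ⟨j, hj⟩ := h ⌈max r 0⌉₊
      have hfin : (toSet ψ ∩ closedBall 0 ((⌈max r 0⌉₊ : ℕ) : ℝ)).Finite :=
        Set.finite_of_encard_eq_coe hj
      refine hfin.subset (Set.inter_subset_inter_right _ ?_)
      apply closedBall_subset_closedBall
      exact le_trans (le_max_left r 0) (Nat.le_ceil _)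
  rw [he]
  exact MeasurableSet.iInter fun m => MeasurableSet.iUnion fun j =>
    meas_count measurableSet_closedBall j

end Measurability
section Covering

variable {d : ℕ}

/-- Every point of a locally finite configuration is captured by some rational ball. -/
lemma exists_rball {ψ : Config d} (hψ : LocFinite (toSet ψ)) {x : V d} (hx : x ∈ toSet ψ) :
    ∃ b, (toSet ψ ∩ rball b).encard = 1 ∧ ptMap b ψ = x := by
  -- isolation radius
  obtain ⟨ε, hε0, hεsep⟩ : ∃ ε > 0, ∀ y ∈ toSet ψ, y ≠ x → ε ≤ dist y x := by
    set G := (toSet ψ ∩ closedBall 0 (‖x‖ + 1)) \ {x} with hGdef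
    have hG : G.Finite := ((hψ (‖x‖ + 1)).subset Set.diff_subset)
    by_cases hGe : G.Nonempty
    · obtain ⟨y₀, hy₀, hmin⟩ := Set.exists_min_image G (fun y => dist y x) hG hGe
      have hy₀x : y₀ ≠ x := hy₀.2
      refine ⟨min 1 (dist y₀ x), lt_min one_pos (dist_pos.mpr hy₀x), ?_⟩
      intro y hy hne
      by_contra hlt
      push_neg at hlt
      have h1 : dist y x < 1 := lt_of_lt_of_le hlt (min_le_left _ _)
      have hyG : y ∈ G := by
        refine ⟨⟨hy, ?_⟩, hne⟩
        simp only [mem_closedBall, dist_zero_right]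
        calc ‖y‖ = ‖(y - x) + x‖ := by rw [sub_add_cancel]
        _ ≤ ‖y - x‖ + ‖x‖ := norm_add_le _ _
        _ ≤ 1 + ‖x‖ := by rw [← dist_eq_norm]; linarith
        _ = ‖x‖ + 1 := by ring
      have := hmin y hyG
      have h2 : dist y x < dist y₀ x := lt_of_lt_of_le hlt (min_le_right _ _)
      exact absurd this (not_le.mpr h2)
    · refine ⟨1, one_pos, ?_⟩
      intro y hy hne
      by_contra hlt
      push_neg at hlt
      have hyG : y ∈ G := by
        refine ⟨⟨hy, ?_⟩, hne⟩
        simp only [mem_closedBall, dist_zero_right]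
        calc ‖y‖ = ‖(y - x) + x‖ := by rw [sub_add_cancel]
        _ ≤ ‖y - x‖ + ‖x‖ := norm_add_le _ _
        _ ≤ 1 + ‖x‖ := by rw [← dist_eq_norm]; linarith
        _ = ‖x‖ + 1 := by ring
      exact hGe ⟨y, hyG⟩
  -- rational centre
  set η : ℝ := ε / (4 * (d + 1)) with hηdef
  have hη0 : 0 < η := by positivity
  have hq : ∃ q : Fin d → ℚ, ∀ i, |x i - (q i : ℝ)| < η := by
    have : ∀ i : Fin d, ∃ qi : ℚ, |x i - (qi : ℝ)| < η := fun i => exists_rat_near (x i) hη0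
    exact ⟨fun i => (this i).choose, fun i => (this i).choose_spec⟩
  obtain ⟨q, hqnear⟩ := hq
  set c : V d := (WithLp.toLp 2 (fun i => ((q i : ℝ))) : V d) with hcdef
  have hcx : dist c x ≤ ε / 4 := by
    have h1 : dist c x = Real.sqrt (∑ i, dist (c i) (x i) ^ 2) := EuclideanSpace.dist_eq c x
    have h2 : ∑ i, dist (c i) (x i) ^ 2 ≤ (d : ℝ) * η ^ 2 := by
      have : ∑ i, dist (c i) (x i) ^ 2 ≤ ∑ _i : Fin d, η ^ 2 := by
        apply Finset.sum_le_sum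
        intro i _
        have : dist (c i) (x i) ≤ η := by
          rw [Real.dist_eq]
          have := hqnear i
          rw [abs_sub_comm] at this
          exact le_of_lt this
        exact pow_le_pow_left₀ dist_nonneg this 2
      rwa [Finset.sum_const, Finset.card_univ, Fintype.card_fin, nsmul_eq_mul] at this
    have h4 : (d : ℝ) * η ^ 2 ≤ ((d + 1) * η) ^ 2 := by
      have : (d : ℝ) ≤ (d + 1) ^ 2 := by nlinarith [Nat.cast_nonneg (α := ℝ) d]
      calc (d : ℝ) * η ^ 2 ≤ (d + 1) ^ 2 * η ^ 2 := by nlinarith [sq_nonneg η]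
      _ = ((d + 1) * η) ^ 2 := by ring
    have h5 : ((d : ℝ) + 1) * η = ε / 4 := by
      rw [hηdef]; field_simp
    calc dist c x = Real.sqrt (∑ i, dist (c i) (x i) ^ 2) := h1
    _ ≤ Real.sqrt (((d + 1) * η) ^ 2) := by
        apply Real.sqrt_le_sqrt; linarith
    _ = (d + 1) * η := Real.sqrt_sq (by positivity)
    _ = ε / 4 := h5
  obtain ⟨ρ, hρ1, hρ2⟩ := exists_rat_btwn (show ε / 4 < ε / 2 by linarith)
  set b : (Fin d → ℚ) × ℚ := (q, ρ) with hbdef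
  have hxball : x ∈ rball b := by
    simp only [rball, mem_ball]
    calc dist x c = dist c x := dist_comm x c
    _ ≤ ε / 4 := hcx
    _ < ρ := hρ1
  have hsub : rball b ⊆ Metric.ball x ε := by
    intro y hy
    simp only [rball, mem_ball] at hy ⊢
    calc dist y x ≤ dist y c + dist c x := dist_triangle y c x
    _ < ρ + ε / 4 := by
        have : dist y (WithLp.toLp 2 (fun i => ((q i : ℝ))) : V d) < (ρ : ℝ) := hy
        linarith [hcx]
    _ < ε / 2 + ε / 4 := by linarith
    _ < ε := by linarith
  have hsingle : toSet ψ ∩ rball b = {x} := by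
    apply Set.eq_singleton_iff_unique_mem.mpr
    refine ⟨⟨hx, hxball⟩, ?_⟩
    intro y ⟨hyψ, hyb⟩
    by_contra hne
    have := hεsep y hyψ hne
    have := hsub hyb
    simp only [mem_ball] at this
    linarith
  have hcard : (toSet ψ ∩ rball b).encard = 1 := by rw [hsingle]; exact Set.encard_singleton _
  refine ⟨b, hcard, ?_⟩
  have := ptMap_spec hcard
  rw [hsingle] at this
  exact (Set.singleton_eq_singleton_iff.mp this.symm)

end Covering

section BorelPref

variable {d : ℕ}

lemma continuous_coord (i : Fin d) : Continuous (fun x : V d => x i) :=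
  (EuclideanSpace.proj (𝕜 := ℝ) i).continuous

lemma measurableSet_lexLT : MeasurableSet {q : V d × V d | lexLT q.1 q.2} := by
  have he : {q : V d × V d | lexLT q.1 q.2} =
      ⋃ i : Fin d, ({q : V d × V d | q.1 i < q.2 i} ∩
        ⋂ j : Fin d, ⋂ _ : j < i, {q : V d × V d | q.1 j = q.2 j}) := by
    ext q
    simp only [Set.mem_setOf_eq, Set.mem_iUnion, Set.mem_inter_iff, Set.mem_iInter, lexLT]
  rw [he]
  refine MeasurableSet.iUnion fun i => MeasurableSet.inter ?_ ?_
  · exact measurableSet_lt ((continuous_coord i).comp continuous_fst).measurable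
      ((continuous_coord i).comp continuous_snd).measurable
  · exact MeasurableSet.iInter fun j => MeasurableSet.iInter fun _ =>
      measurableSet_eq_fun ((continuous_coord j).comp continuous_fst).measurable
        ((continuous_coord j).comp continuous_snd).measurable

lemma measurableSet_prefPhi (p : V d) : MeasurableSet {q : V d × V d | prefPhi p q.1 q.2} := by
  have he : {q : V d × V d | prefPhi p q.1 q.2} =
      {q : V d × V d | dist q.1 p < dist q.2 p} ∪
        ({q : V d × V d | dist q.1 p = dist q.2 p} ∩ {q : V d × V d | lexLT q.1 q.2}) := by
    ext q; simp [prefPhi, Set.mem_setOf_eq]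
  rw [he]
  have hc1 : Continuous (fun q : V d × V d => dist q.1 p) :=
    continuous_fst.dist continuous_const
  have hc2 : Continuous (fun q : V d × V d => dist q.2 p) :=
    continuous_snd.dist continuous_const
  exact (measurableSet_lt hc1.measurable hc2.measurable).union
    ((measurableSet_eq_fun hc1.measurable hc2.measurable).inter measurableSet_lexLT)

lemma measurableSet_prefPsiPt (p q0 : V d) : MeasurableSet {x : V d | prefPsi x p q0} := by
  have hc1 : Continuous (fun x : V d => dist p x) := continuous_const.dist continuous_id
  have hc2 : Continuous (fun x : V d => dist q0 x) := continuous_const.dist continuous_id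
  by_cases hl : lexLT q0 p
  · have he : {x : V d | prefPsi x p q0} =
        {x : V d | dist p x < dist q0 x} ∪ {x : V d | dist p x = dist q0 x} := by
      ext x; simp [prefPsi, hl]
    rw [he]
    exact (measurableSet_lt hc1.measurable hc2.measurable).union
      (measurableSet_eq_fun hc1.measurable hc2.measurable)
  · have he : {x : V d | prefPsi x p q0} = {x : V d | dist p x < dist q0 x} := by
      ext x; simp [prefPsi, hl]
    rw [he]
    exact measurableSet_lt hc1.measurable hc2.measurable

lemma measurableSet_diag : MeasurableSet {q : V d × V d | q.1 = q.2} :=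
  (isClosed_eq continuous_fst continuous_snd).measurableSet

end BorelPref
section StageMeas

variable {d : ℕ}

def stage1Set (d : ℕ) (n : ℕ) (p : V d) : Set (Config d) :=
  {ψ | LocFinite (toSet ψ) ∧ p ∈ (stages (lattice d) (toSet ψ) n).1}

def stage2Set (d : ℕ) (n : ℕ) : Set (Config d × V d) :=
  {q | LocFinite (toSet q.1) ∧ q.2 ∈ (stages (lattice d) (toSet q.1) n).2}

def mutSet (d : ℕ) (n : ℕ) (p : V d) : Set (Config d × V d) :=
  {q | LocFinite (toSet q.1) ∧
    MutualNN (stages (lattice d) (toSet q.1) n).1 (stages (lattice d) (toSet q.1) n).2 p q.2}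

lemma meas_mut_of (n : ℕ) (h1 : ∀ p, MeasurableSet (stage1Set d n p))
    (h2 : MeasurableSet (stage2Set d n)) (p : V d) :
    MeasurableSet (mutSet d n p) := by
  have he : mutSet d n p =
      (Prod.fst ⁻¹' stage1Set d n p) ∩ stage2Set d n ∩
        (⋂ b : (Fin d → ℚ) × ℚ,
          ({q : Config d × V d | (toSet q.1 ∩ rball b).encard = 1 ∧
            (q.1, ptMap b q.1) ∈ stage2Set d n ∧ ptMap b q.1 ≠ q.2 ∧
            ¬ prefPhi p q.2 (ptMap b q.1)})ᶜ) ∩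
        (⋂ k : Fin d → ℤ,
          {q : Config d × V d | q.1 ∈ stage1Set d n (intVec k) →
            (intVec k = p ∨ prefPsi q.2 p (intVec k))}) := by
    ext ⟨ψ, x⟩
    simp only [mutSet, Set.mem_inter_iff, Set.mem_preimage, Set.mem_iInter, Set.mem_compl_iff,
      Set.mem_setOf_eq]
    constructor
    · rintro ⟨hLF, hm⟩
      refine ⟨⟨⟨?_, ?_⟩, ?_⟩, ?_⟩
      · exact ⟨hLF, hm.1⟩
      · exact ⟨hLF, hm.2.1⟩
      · intro b
        rintro ⟨hDb, hS, hne, hnp⟩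
        exact hnp (hm.2.2.1 (ptMap b ψ) hS.2 hne)
      · intro k
        rintro ⟨-, hk⟩
        by_cases he' : intVec k = p
        · exact Or.inl he'
        · exact Or.inr (hm.2.2.2 (intVec k) hk he')
    · rintro ⟨⟨⟨⟨hLF, hp1⟩, ⟨-, hx2⟩⟩, hC⟩, hD⟩
      refine ⟨hLF, hp1, hx2, ?_, ?_⟩
      · intro y hy hne
        obtain ⟨b, hb1, hb2⟩ := exists_rball hLF (stages_snd_subset n hy)
        by_contra hnp
        refine hC b ⟨hb1, ?_, ?_, ?_⟩
        · rw [hb2]; exact ⟨hLF, hy⟩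
        · rw [hb2]; exact hne
        · rw [hb2]; exact hnp
      · intro q' hq' hne
        obtain ⟨k, rfl⟩ := stages_fst_subset n hq'
        rcases hD k ⟨hLF, hq'⟩ with he' | hpref
        · exact absurd he' hne
        · exact hpref
  rw [he]
  have mpt : ∀ b, Measurable fun q : Config d × V d => ptMap b q.1 := fun b =>
    (measurable_ptMap b).comp measurable_fst
  refine MeasurableSet.inter (MeasurableSet.inter (MeasurableSet.inter ?_ ?_) ?_) ?_
  · exact measurable_fst (h1 p)
  · exact h2
  · refine MeasurableSet.iInter fun b => MeasurableSet.compl ?_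
    have m1 : MeasurableSet {q : Config d × V d | (toSet q.1 ∩ rball b).encard = 1} :=
      measurable_fst (meas_count (rball_measurableSet b) 1)
    have m2 : MeasurableSet {q : Config d × V d | (q.1, ptMap b q.1) ∈ stage2Set d n} :=
      (measurable_fst.prodMk (mpt b)) h2
    have m3 : MeasurableSet {q : Config d × V d | ptMap b q.1 ≠ q.2} := by
      have hh : {q : Config d × V d | ptMap b q.1 ≠ q.2} =
          ((fun q : Config d × V d => (ptMap b q.1, q.2)) ⁻¹'
            {y : V d × V d | y.1 = y.2})ᶜ := rfl
      rw [hh]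
      exact (((mpt b).prodMk measurable_snd) measurableSet_diag).compl
    have m4 : MeasurableSet {q : Config d × V d | ¬ prefPhi p q.2 (ptMap b q.1)} := by
      have hh : {q : Config d × V d | ¬ prefPhi p q.2 (ptMap b q.1)} =
          ((fun q : Config d × V d => (q.2, ptMap b q.1)) ⁻¹'
            {y : V d × V d | prefPhi p y.1 y.2})ᶜ := rfl
      rw [hh]
      exact ((measurable_snd.prodMk (mpt b)) (measurableSet_prefPhi p)).compl
    exact m1.inter (m2.inter (m3.inter m4))
  · refine MeasurableSet.iInter fun k => ?_
    have hh : {q : Config d × V d | q.1 ∈ stage1Set d n (intVec k) →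
          (intVec k = p ∨ prefPsi q.2 p (intVec k))} =
        (Prod.fst ⁻¹' stage1Set d n (intVec k))ᶜ ∪
          {q : Config d × V d | intVec k = p ∨ prefPsi q.2 p (intVec k)} := by
      ext q
      simp only [Set.mem_setOf_eq, Set.mem_union, Set.mem_compl_iff, Set.mem_preimage]
      tauto
    rw [hh]
    refine MeasurableSet.union (measurable_fst (h1 (intVec k))).compl ?_
    by_cases hkp : intVec k = p
    · have : {q : Config d × V d | intVec k = p ∨ prefPsi q.2 p (intVec k)} = Set.univ := by
        ext q; simp [hkp]
      rw [this]; exact MeasurableSet.univ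
    · have : {q : Config d × V d | intVec k = p ∨ prefPsi q.2 p (intVec k)} =
          Prod.snd ⁻¹' {x : V d | prefPsi x p (intVec k)} := by
        ext q; simp [hkp]
      rw [this]
      exact measurable_snd (measurableSet_prefPsiPt p (intVec k))

lemma meas_stages : ∀ n : ℕ,
    (∀ p, MeasurableSet (stage1Set d n p)) ∧ MeasurableSet (stage2Set d n) := by
  intro n
  induction n with
  | zero =>
    constructor
    · intro p
      by_cases hp : p ∈ lattice d
      · have he : stage1Set d 0 p = LFset d := by
          ext ψ; simp only [stage1Set, LFset, Set.mem_setOf_eq]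
          exact ⟨fun h => h.1, fun h => ⟨h, hp⟩⟩
        rw [he]; exact meas_LFset
      · have he : stage1Set d 0 p = ∅ := by
          ext ψ; simp only [stage1Set, Set.mem_setOf_eq, Set.mem_empty_iff_false]
          exact ⟨fun h => hp h.2, fun h => h.elim⟩
        rw [he]; exact MeasurableSet.empty
    · have he : stage2Set d 0 = (Prod.fst ⁻¹' LFset d) ∩
          ⋃ b : (Fin d → ℚ) × ℚ, {q : Config d × V d |
            (toSet q.1 ∩ rball b).encard = 1 ∧ ptMap b q.1 = q.2} := by
        ext ⟨ψ, x⟩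
        simp only [stage2Set, Set.mem_inter_iff, Set.mem_preimage, Set.mem_iUnion,
          Set.mem_setOf_eq, LFset]
        constructor
        · rintro ⟨hLF, hx⟩
          obtain ⟨b, hb1, hb2⟩ := exists_rball hLF hx
          exact ⟨hLF, b, hb1, hb2⟩
        · rintro ⟨hLF, b, hb1, hb2⟩
          exact ⟨hLF, hb2 ▸ (ptMap_mem hb1).1⟩
      rw [he]
      refine (measurable_fst meas_LFset).inter (MeasurableSet.iUnion fun b => ?_)
      refine (measurable_fst (meas_count (rball_measurableSet b) 1)).inter ?_
      show MeasurableSet ((fun q : Config d × V d => (ptMap b q.1, q.2)) ⁻¹'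
        {y : V d × V d | y.1 = y.2})
      exact (((measurable_ptMap b).comp measurable_fst).prodMk measurable_snd)
        measurableSet_diag
  | succ n ih =>
    obtain ⟨ih1, ih2⟩ := ih
    have ihm : ∀ p, MeasurableSet (mutSet d n p) := meas_mut_of n ih1 ih2
    constructor
    · intro p
      have he : stage1Set d (n + 1) p = stage1Set d n p \
          ⋃ b : (Fin d → ℚ) × ℚ, {ψ : Config d |
            (toSet ψ ∩ rball b).encard = 1 ∧ (ψ, ptMap b ψ) ∈ mutSet d n p} := by
        ext ψ
        simp only [stage1Set, Set.mem_diff, Set.mem_iUnion, Set.mem_setOf_eq,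
          stages_succ_fst]
        constructor
        · rintro ⟨hLF, hmem, hnot⟩
          refine ⟨⟨hLF, hmem⟩, ?_⟩
          rintro ⟨b, hb1, hb2⟩
          exact hnot ⟨ptMap b ψ, hb2.2⟩
        · rintro ⟨⟨hLF, hmem⟩, hnot⟩
          refine ⟨hLF, hmem, ?_⟩
          rintro ⟨x, hx⟩
          obtain ⟨b, hb1, hb2⟩ := exists_rball hLF (stages_snd_subset n hx.2.1)
          refine hnot ⟨b, hb1, ?_⟩
          rw [hb2]; exact ⟨hLF, hx⟩
      rw [he]
      refine (ih1 p).diff (MeasurableSet.iUnion fun b => ?_)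
      exact (meas_count (rball_measurableSet b) 1).inter
        ((measurable_id.prodMk (measurable_ptMap b)) (ihm p))
    · have he : stage2Set d (n + 1) = stage2Set d n \
          ⋃ k : Fin d → ℤ, mutSet d n (intVec k) := by
        ext ⟨ψ, x⟩
        simp only [stage2Set, mutSet, Set.mem_diff, Set.mem_iUnion, Set.mem_setOf_eq,
          stages_succ_snd]
        constructor
        · rintro ⟨hLF, hmem, hnot⟩
          refine ⟨⟨hLF, hmem⟩, ?_⟩
          rintro ⟨k, -, hk⟩
          exact hnot ⟨intVec k, hk⟩
        · rintro ⟨⟨hLF, hmem⟩, hnot⟩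
          refine ⟨hLF, hmem, ?_⟩
          rintro ⟨p', hp'⟩
          obtain ⟨k, rfl⟩ := stages_fst_subset n hp'.1
          exact hnot ⟨k, hLF, hp'⟩
      rw [he]
      exact ih2.diff (MeasurableSet.iUnion fun k => ihm (intVec k))

lemma zero_mem_lattice : (0 : V d) ∈ lattice d := by
  refine ⟨fun _ => 0, ?_⟩
  ext i
  simp only [Int.cast_zero]
  rfl

/-- The matching-tail event, as a set of configurations. -/
def tailSet (d : ℕ) (t : ℝ) : Set (Config d) :=
  {ψ | LocFinite (toSet ψ) ∧
    ∀ y, matchTau (lattice d) (toSet ψ) 0 = some y → t < ‖y‖}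

lemma meas_tailSet (t : ℝ) : MeasurableSet (tailSet d t) := by
  have he : tailSet d t = LFset d \
      ⋃ n : ℕ, ⋃ b : (Fin d → ℚ) × ℚ, {ψ : Config d |
        (toSet ψ ∩ rball b).encard = 1 ∧ (ψ, ptMap b ψ) ∈ mutSet d n 0 ∧
          ‖ptMap b ψ‖ ≤ t} := by
    ext ψ
    simp only [tailSet, LFset, Set.mem_diff, Set.mem_iUnion, Set.mem_setOf_eq]
    constructor
    · rintro ⟨hLF, htail⟩
      refine ⟨hLF, ?_⟩
      rintro ⟨n, b, hb1, hb2, hb3⟩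
      exact absurd (htail _ (matchTau_phi_eq zero_mem_lattice hb2.2)) (not_lt.mpr hb3)
    · rintro ⟨hLF, hnot⟩
      refine ⟨hLF, fun y hy => ?_⟩
      by_contra hle
      push_neg at hle
      obtain ⟨n, hn⟩ := matchTau_phi_some zero_mem_lattice hy
      obtain ⟨b, hb1, hb2⟩ := exists_rball hLF (stages_snd_subset n hn.2.1)
      refine hnot ⟨n, b, hb1, ?_, ?_⟩
      · rw [hb2]; exact ⟨hLF, hn⟩
      · rw [hb2]; exact hle
  rw [he]
  refine meas_LFset.diff (MeasurableSet.iUnion fun n => MeasurableSet.iUnion fun b => ?_)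
  have hnorm : MeasurableSet {ψ : Config d | ‖ptMap b ψ‖ ≤ t} := by
    have hh : {ψ : Config d | ‖ptMap b ψ‖ ≤ t} = ptMap b ⁻¹' {y : V d | ‖y‖ ≤ t} := rfl
    rw [hh]
    exact (measurable_ptMap b)
      ((isClosed_le continuous_norm continuous_const).measurableSet)
  have hmut : MeasurableSet (mutSet d n 0) :=
    meas_mut_of n (meas_stages n).1 (meas_stages n).2 0
  exact (meas_count (rball_measurableSet b) 1).inter
    (((measurable_id.prodMk (measurable_ptMap b)) hmut).inter hnorm)

end StageMeas
section Analysis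

variable {d : ℕ}

lemma abs_coord_le_dist (k : Fin d → ℤ) (x : V d) (i : Fin d) :
    |(k i : ℝ) - x i| ≤ dist (intVec k) x := by
  have h1 : dist (intVec k) x = Real.sqrt (∑ j, dist (intVec k j) (x j) ^ 2) :=
    EuclideanSpace.dist_eq _ _
  calc |(k i : ℝ) - x i| = dist ((k i : ℝ)) (x i) := (Real.dist_eq _ _).symm
  _ = Real.sqrt (dist ((k i : ℝ)) (x i) ^ 2) := (Real.sqrt_sq dist_nonneg).symm
  _ ≤ Real.sqrt (∑ j, dist (intVec k j) (x j) ^ 2) := by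
      apply Real.sqrt_le_sqrt
      show dist (intVec k i) (x i) ^ 2 ≤ _
      exact Finset.single_le_sum (f := fun j => dist (intVec k j) (x j) ^ 2)
        (fun j _ => sq_nonneg _) (Finset.mem_univ i)
  _ = dist (intVec k) x := h1.symm

lemma fiber_subset_box (x : V d) (m : ℕ) :
    {k : Fin d → ℤ | ⌈dist (intVec k) x⌉₊ = m} ⊆
      ↑(Fintype.piFinset fun i : Fin d => Finset.Icc ⌈x i - m⌉ ⌊x i + m⌋) := by
  intro k hk
  simp only [Set.mem_setOf_eq] at hk
  have hdist : dist (intVec k) x ≤ m := by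
    rw [← hk]; exact Nat.le_ceil _
  rw [Finset.mem_coe, Fintype.mem_piFinset]
  intro i
  have habs : |(k i : ℝ) - x i| ≤ m := le_trans (abs_coord_le_dist k x i) hdist
  rw [abs_le] at habs
  rw [Finset.mem_Icc]
  constructor
  · rw [Int.ceil_le]; push_cast; linarith [habs.1]
  · rw [Int.le_floor]; push_cast; linarith [habs.2]

lemma box_card_le (x : V d) (m : ℕ) :
    (Fintype.piFinset fun i : Fin d => Finset.Icc ⌈x i - m⌉ ⌊x i + m⌋).card
      ≤ (2 * m + 2) ^ d := by
  rw [Fintype.card_piFinset]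
  have hcard : ∀ i : Fin d, (Finset.Icc (⌈x i - m⌉) (⌊x i + m⌋)).card ≤ 2 * m + 2 := by
    intro i
    rw [Int.card_Icc, Int.toNat_le]
    have h1 : (⌊x i + m⌋ : ℝ) ≤ x i + m := Int.floor_le _
    have h2 : (x i - m : ℝ) ≤ ⌈x i - m⌉ := Int.le_ceil _
    have h3 : ((⌊x i + m⌋ + 1 - ⌈x i - m⌉ : ℤ) : ℝ) ≤ ((2 * m + 2 : ℕ) : ℝ) := by
      push_cast; linarith
    exact_mod_cast h3
  calc ∏ i : Fin d, (Finset.Icc (⌈x i - m⌉) (⌊x i + m⌋)).card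
      ≤ ∏ _i : Fin d, (2 * m + 2) := Finset.prod_le_prod' fun i _ => hcard i
  _ = (2 * m + 2) ^ d := by
      rw [Finset.prod_const, Finset.card_univ, Fintype.card_fin]

/-- The comparison sequence. -/
def aSeq (d : ℕ) (c δ : ℝ) (m : ℕ) : ℝ :=
  (((2 * m + 2) ^ d : ℕ) : ℝ) * Real.exp (-(max 0 ((m : ℝ) - 2)) ^ δ / c)

lemma aSeq_nonneg (c δ : ℝ) (m : ℕ) : 0 ≤ aSeq d c δ m := by
  unfold aSeq; positivity

lemma aSeq_summable {c δ : ℝ} (hc : 0 < c) (hδ : 0 < δ) (d : ℕ) :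
    Summable (aSeq d c δ) := by
  set N : ℕ := ⌈((d : ℝ) + 2) / δ⌉₊ with hN
  set K : ℝ := 4 ^ d * (N.factorial : ℝ) * c ^ N * 2 ^ (d + 2) with hK
  rw [← summable_nat_add_iff 5]
  have hbase : Summable (fun n : ℕ => K * (1 / (n : ℝ) ^ 2)) :=
    (Real.summable_one_div_nat_pow.mpr one_lt_two).mul_left K
  have hcomp : Summable (fun m : ℕ => K * (1 / ((m + 5 : ℕ) : ℝ) ^ 2)) := by
    have := (summable_nat_add_iff (f := fun n : ℕ => K * (1 / (n : ℝ) ^ 2)) 5).mpr hbase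
    exact this
  refine Summable.of_nonneg_of_le (fun m => aSeq_nonneg c δ _) (fun m => ?_) hcomp
  set M : ℕ := m + 5 with hM
  set MR : ℝ := (M : ℝ) with hMR
  have hMR5 : (5 : ℝ) ≤ MR := by
    rw [hMR, hM]; push_cast; linarith
  have hMRpos : 0 < MR := by linarith
  set q : ℝ := MR - 2 with hq
  have hq3 : (3 : ℝ) ≤ q := by rw [hq]; linarith
  have hqpos : 0 < q := by linarith
  have hq1 : 1 ≤ q := by linarith
  have hmaxq : max 0 ((M : ℝ) - 2) = q := max_eq_right (by rw [hq] at *; linarith)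
  -- Step 1 : exp bound
  set y : ℝ := q ^ δ / c with hy
  have hqδpos : 0 < q ^ δ := Real.rpow_pos_of_pos hqpos δ
  have hypos : 0 < y := div_pos hqδpos hc
  have hfact : y ^ N / (N.factorial : ℝ) ≤ Real.exp y := by
    refine le_trans ?_ (Real.sum_le_exp_of_nonneg hypos.le (N + 1))
    exact Finset.single_le_sum (f := fun i => y ^ i / (i.factorial : ℝ))
      (fun i _ => by positivity) (Finset.mem_range.mpr (Nat.lt_succ_self N))
  have hynpos : 0 < y ^ N / (N.factorial : ℝ) := by positivity
  have hE : Real.exp (-(q ^ δ) / c) ≤ (N.factorial : ℝ) * c ^ N / q ^ (δ * (N : ℝ)) := by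
    have h1 : Real.exp (-(q ^ δ) / c) = (Real.exp y)⁻¹ := by
      rw [neg_div, Real.exp_neg]
    have h2 : (Real.exp y)⁻¹ ≤ (y ^ N / (N.factorial : ℝ))⁻¹ :=
      inv_anti₀ hynpos hfact
    have h3 : (y ^ N / (N.factorial : ℝ))⁻¹ = (N.factorial : ℝ) / y ^ N := by
      field_simp
    have h4 : y ^ N = q ^ (δ * (N : ℝ)) / c ^ N := by
      rw [hy, div_pow, ← Real.rpow_natCast (q ^ δ) N, ← Real.rpow_mul hqpos.le]
    have h5 : (N.factorial : ℝ) / y ^ N = (N.factorial : ℝ) * c ^ N / q ^ (δ * (N : ℝ)) := by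
      rw [h4]
      rw [div_div_eq_mul_div]
    rw [h1, ← h5, ← h3]
    exact h2
  -- Step 2 : power bound
  have hexp2 : ((d : ℝ) + 2) ≤ δ * (N : ℝ) := by
    have h1 : ((d : ℝ) + 2) / δ ≤ (N : ℝ) := Nat.le_ceil _
    rw [div_le_iff₀ hδ] at h1
    have h2 : (N : ℝ) * δ = δ * (N : ℝ) := mul_comm _ _
    linarith
  have hG : (MR / 2) ^ (d + 2) ≤ q ^ (δ * (N : ℝ)) := by
    have h1 : q ^ ((d : ℝ) + 2) ≤ q ^ (δ * (N : ℝ)) :=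
      Real.rpow_le_rpow_of_exponent_le hq1 hexp2
    have hq2 : MR / 2 ≤ q := by rw [hq]; linarith
    have h2 : (MR / 2) ^ ((d : ℝ) + 2) ≤ q ^ ((d : ℝ) + 2) :=
      Real.rpow_le_rpow (by positivity) hq2 (by positivity)
    have h3 : (MR / 2) ^ ((d : ℝ) + 2) = (MR / 2) ^ (d + 2) := by
      rw [show ((d : ℝ) + 2) = ((d + 2 : ℕ) : ℝ) by push_cast; ring, Real.rpow_natCast]
    rw [← h3]
    exact le_trans h2 h1
  -- Step 3 : combine
  have hEG : Real.exp (-(q ^ δ) / c) ≤ (N.factorial : ℝ) * c ^ N / (MR / 2) ^ (d + 2) := by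
    refine le_trans hE ?_
    apply div_le_div_of_nonneg_left (by positivity) (by positivity) hG
  have hMReq : MR = (m : ℝ) + 5 := by rw [hMR, hM]; push_cast; ring
  have hA : (((2 * M + 2) ^ d : ℕ) : ℝ) ≤ (4 * MR) ^ d := by
    push_cast
    apply pow_le_pow_left₀ (by positivity)
    linarith
  have hcombine : aSeq d c δ M ≤ (4 * MR) ^ d * ((N.factorial : ℝ) * c ^ N / (MR / 2) ^ (d + 2)) := by
    unfold aSeq
    rw [hmaxq]
    exact mul_le_mul hA hEG (Real.exp_nonneg _) (by positivity)
  have hfinal : (4 * MR) ^ d * ((N.factorial : ℝ) * c ^ N / (MR / 2) ^ (d + 2)) =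
      K * (1 / MR ^ 2) := by
    rw [hK]
    have hMRne : MR ≠ 0 := ne_of_gt hMRpos
    field_simp
    have h12 : ((1:ℝ)/2)^d * 2^d = 1 := by rw [← mul_pow]; norm_num
    linear_combination (-(MR^2*MR^d*4^d)) * h12
  calc aSeq d c δ (m + 5) = aSeq d c δ M := rfl
  _ ≤ K * (1 / MR ^ 2) := by rw [← hfinal]; exact hcombine
  _ = K * (1 / ((m + 5 : ℕ) : ℝ) ^ 2) := rfl

lemma lattice_sum_bound (d : ℕ) {c δ : ℝ} (hc : 0 < c) (hδ : 0 < δ) :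
    ∃ C : ℝ, 0 ≤ C ∧ ∀ x : V d,
      (∑' k : Fin d → ℤ,
        ENNReal.ofReal (Real.exp (-(max 0 (dist (intVec k) x - 1)) ^ δ / c)))
      ≤ ENNReal.ofReal C := by
  refine ⟨∑' m, aSeq d c δ m, tsum_nonneg (fun m => aSeq_nonneg c δ m), ?_⟩
  intro x
  set f : (Fin d → ℤ) → ℝ≥0∞ := fun k =>
    ENNReal.ofReal (Real.exp (-(max 0 (dist (intVec k) x - 1)) ^ δ / c)) with hf
  set ν : (Fin d → ℤ) → ℕ := fun k => ⌈dist (intVec k) x⌉₊ with hν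
  have htot : ∑' σ : Σ m : ℕ, {k : Fin d → ℤ // ν k = m}, f ((Equiv.sigmaFiberEquiv ν) σ)
      = ∑' k, f k := (Equiv.sigmaFiberEquiv ν).tsum_eq f
  rw [← htot, ENNReal.tsum_sigma']
  have hC : ENNReal.ofReal (∑' m, aSeq d c δ m) = ∑' m, ENNReal.ofReal (aSeq d c δ m) :=
    ENNReal.ofReal_tsum_of_nonneg (fun m => aSeq_nonneg c δ m) (aSeq_summable hc hδ d)
  rw [hC]
  refine ENNReal.tsum_le_tsum fun m => ?_
  -- inner sum over the fiber
  have hsub : {k : Fin d → ℤ | ν k = m} ⊆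
      ↑(Fintype.piFinset fun i : Fin d => Finset.Icc ⌈x i - m⌉ ⌊x i + m⌋) :=
    fiber_subset_box x m
  have hfin : {k : Fin d → ℤ | ν k = m}.Finite :=
    Set.Finite.subset (Finset.finite_toSet _) hsub
  haveI : Fintype {k : Fin d → ℤ // ν k = m} := hfin.fintype
  rw [tsum_fintype]
  set B : ℝ≥0∞ := ENNReal.ofReal (Real.exp (-(max 0 ((m : ℝ) - 2)) ^ δ / c)) with hB
  have hbound : ∀ k : {k : Fin d → ℤ // ν k = m}, f k.1 ≤ B := by
    intro k
    rw [hf, hB]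
    apply ENNReal.ofReal_le_ofReal
    apply Real.exp_le_exp.mpr
    rw [neg_div, neg_div, neg_le_neg_iff]
    apply (div_le_div_iff_of_pos_right hc).mpr
    apply Real.rpow_le_rpow (le_max_left _ _) _ hδ.le
    apply max_le_max le_rfl
    have h1 : (m : ℝ) < dist (intVec k.1) x + 1 := by
      have hk2 : ⌈dist (intVec k.1) x⌉₊ = m := k.2
      have h3 := Nat.ceil_lt_add_one (dist_nonneg (x := intVec k.1) (y := x))
      rw [hk2] at h3
      exact h3
    linarith
  have hcard : Fintype.card {k : Fin d → ℤ // ν k = m} ≤ (2 * m + 2) ^ d := by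
    have hinj : Function.Injective (fun k : {k : Fin d → ℤ // ν k = m} =>
        (⟨k.1, hsub k.2⟩ : {k : Fin d → ℤ // k ∈ (Fintype.piFinset
          fun i : Fin d => Finset.Icc ⌈x i - m⌉ ⌊x i + m⌋)})) := by
      intro a b hab
      exact Subtype.ext (Subtype.mk_eq_mk.mp hab)
    calc Fintype.card {k : Fin d → ℤ // ν k = m}
        ≤ Fintype.card {k : Fin d → ℤ // k ∈ (Fintype.piFinset
          fun i : Fin d => Finset.Icc ⌈x i - m⌉ ⌊x i + m⌋)} :=
        Fintype.card_le_of_injective _ hinj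
    _ = (Fintype.piFinset fun i : Fin d => Finset.Icc ⌈x i - m⌉ ⌊x i + m⌋).card :=
        Fintype.card_coe _
    _ ≤ (2 * m + 2) ^ d := box_card_le x m
  calc ∑ k : {k : Fin d → ℤ // ν k = m}, f k.1
      ≤ ∑ _k : {k : Fin d → ℤ // ν k = m}, B := Finset.sum_le_sum fun k _ => hbound k
  _ = (Fintype.card {k : Fin d → ℤ // ν k = m}) • B := by
      rw [Finset.sum_const, Finset.card_univ]
  _ = ((Fintype.card {k : Fin d → ℤ // ν k = m}) : ℝ≥0∞) * B := nsmul_eq_mul _ _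
  _ ≤ (((2 * m + 2) ^ d : ℕ) : ℝ≥0∞) * B := by
      exact mul_le_mul_left (by exact_mod_cast hcard) B
  _ = ENNReal.ofReal (aSeq d c δ m) := by
      rw [hB, ← ENNReal.ofReal_natCast ((2 * m + 2) ^ d),
        ← ENNReal.ofReal_mul (Nat.cast_nonneg _)]
      rfl

end Analysis
section Assembly

variable {d : ℕ}

lemma intVec_zero : intVec (0 : Fin d → ℤ) = 0 := by
  ext i
  simp only [intVec, Pi.zero_apply, Int.cast_zero]
  rfl

lemma intVec_neg (k : Fin d → ℤ) : intVec (-k) = -(intVec k) := by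
  ext i
  simp only [intVec, Pi.neg_apply, Int.cast_neg]
  rfl

end Assembly

/-- If the matching distance of the origin for the stationary point
process `Ψ` has a subexponential tail with exponent `δ`, then so does the matching distance
of an extra point `x` added to `Ψ` (on the event that it is matched at all). -/
theorem statement12 (d : ℕ) {Ω : Type*} [MeasurableSpace Ω] (P : Measure Ω)
    [IsProbabilityMeasure P] (Ψ : Ω → Set (V d)) (hΨ : IsStationaryPP P Ψ)
    (c₁ δ : ℝ) (hc₁ : 0 < c₁) (hδ : 0 < δ)
    (htail : ∀ r : ℝ, 0 ≤ r →
        P {ω | ∀ y : V d, matchTau (lattice d) (Ψ ω) 0 = some y → r < ‖y‖}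
          ≤ ENNReal.ofReal (c₁ * Real.exp (-(r ^ δ) / c₁))) :
    ∃ c₃ : ℝ, 0 < c₃ ∧ ∀ r : ℝ, 0 < r → ∀ x : V d,
      P {ω | ∃ y : V d, matchTau (lattice d) (insert x (Ψ ω)) x = some y ∧ r < dist y x}
        ≤ ENNReal.ofReal (c₃ * Real.exp (-(r ^ δ) / c₃)) := by
  obtain ⟨⟨hmeas, hae⟩, hstat⟩ := hΨ
  have h2c₁ : (0 : ℝ) < 2 * c₁ := by linarith
  obtain ⟨C, hC0, hCb⟩ := lattice_sum_bound d h2c₁ hδ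
  set c₃ : ℝ := max (2 * c₁) (c₁ * C) with hc₃def
  have hc₃pos : 0 < c₃ := lt_of_lt_of_le h2c₁ (le_max_left _ _)
  refine ⟨c₃, hc₃pos, ?_⟩
  intro r hr x
  by_cases hxlat : x ∈ lattice d
  · -- the extra point is a lattice point: it is matched to itself at distance 0
    have hempty : {ω | ∃ y : V d, matchTau (lattice d) (insert x (Ψ ω)) x = some y ∧
        r < dist y x} = ∅ := by
      ext ω
      simp only [Set.mem_setOf_eq, Set.mem_empty_iff_false, iff_false, not_exists]
      rintro y ⟨hy, hry⟩
      have hself : matchTau (lattice d) (insert x (Ψ ω)) x = some x :=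
        matchTau_self hxlat (Set.mem_insert _ _)
      rw [hself] at hy
      rw [← Option.some.inj hy, dist_self] at hry
      linarith
    rw [hempty, measure_empty]
    exact bot_le
  · -- main case
    set EV : Set Ω := {ω | ∃ y : V d, matchTau (lattice d) (insert x (Ψ ω)) x = some y ∧
        r < dist y x} with hEV
    set A : (Fin d → ℤ) → Set (Set (V d)) := fun k =>
      {φ : Set (V d) | LocFinite φ ∧ ∀ y, matchTau (lattice d) φ 0 = some y →
        (max r (dist (intVec k) x - 1)) < ‖y‖} with hA
    have hAmeas : ∀ k, MeasurableSet[configSA d] (A k) := fun k =>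
      meas_tailSet (max r (dist (intVec k) x - 1))
    set H : (Fin d → ℤ) → Set Ω := fun k =>
      {ω | shift (Ψ ω) (-(intVec k)) ∈ A k} with hH
    -- pointwise inclusion
    have hincl : EV ∩ {ω | LocFinite (Ψ ω)} ⊆ ⋃ k : Fin d → ℤ, H k := by
      rintro ω ⟨⟨y, hy, hry⟩, hLF⟩
      have hxmem : x ∈ insert x (Ψ ω) := Set.mem_insert _ _
      obtain ⟨b, hb⟩ := matchTau_psi_some hxlat hxmem hy
      have hylat : y ∈ lattice d := stages_fst_subset b hb.1
      obtain ⟨k, rfl⟩ := hylat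
      have hmono := matchTau_mono hxlat hy
      refine Set.mem_iUnion.mpr ⟨k, ?_⟩
      show shift (Ψ ω) (-(intVec k)) ∈ A k
      refine ⟨locFinite_shift _ hLF, ?_⟩
      intro y' hy'
      -- translate back
      have hv : -(intVec k) = intVec (-k) := (intVec_neg k).symm
      have hz : intVec k + intVec (-k) = 0 := by
        rw [← intVec_add]
        simp only [add_neg_cancel]
        exact intVec_zero
      have hshift := matchTau_shift (φ := lattice d) (ψ := Ψ ω) (intVec (-k)) (intVec k)
      rw [lattice_shift, hz] at hshift
      rw [hv, hshift] at hy'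
      rcases Option.map_eq_some_iff.mp hy' with ⟨w, hw, hwb⟩
      have hdist : dist x (intVec k) ≤ dist w (intVec k) := hmono.2 w hw
      have hnorm : ‖y'‖ = dist w (intVec k) := by
        rw [← hwb, intVec_neg, ← sub_eq_add_neg, ← dist_eq_norm]
      rw [hnorm]
      have hrk : r < dist (intVec k) x := hry
      rw [dist_comm x (intVec k)] at hdist
      apply max_lt
      · linarith
      · linarith
    -- probability estimates
    have hnull : P {ω | LocFinite (Ψ ω)}ᶜ = 0 := by
      have := ae_iff.mp hae
      exact this
    have hsplit : P EV ≤ P (EV ∩ {ω | LocFinite (Ψ ω)}) := by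
      have h1 : EV ⊆ (EV ∩ {ω | LocFinite (Ψ ω)}) ∪ {ω | LocFinite (Ψ ω)}ᶜ := by
        intro ω hω
        by_cases hl : LocFinite (Ψ ω)
        · exact Or.inl ⟨hω, hl⟩
        · exact Or.inr hl
      calc P EV ≤ P ((EV ∩ {ω | LocFinite (Ψ ω)}) ∪ {ω | LocFinite (Ψ ω)}ᶜ) :=
            measure_mono h1
      _ ≤ P (EV ∩ {ω | LocFinite (Ψ ω)}) + P ({ω | LocFinite (Ψ ω)}ᶜ) :=
            measure_union_le _ _
      _ = P (EV ∩ {ω | LocFinite (Ψ ω)}) := by rw [hnull, add_zero]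
    have hstep : ∀ k : Fin d → ℤ, P (H k) ≤
        ENNReal.ofReal (c₁ * Real.exp (-((max r (dist (intVec k) x - 1)) ^ δ) / c₁)) := by
      intro k
      have htk0 : (0 : ℝ) ≤ max r (dist (intVec k) x - 1) :=
        le_trans hr.le (le_max_left _ _)
      have heq : P (H k) = P {ω | Ψ ω ∈ A k} := hstat (-(intVec k)) (A k) (hAmeas k)
      rw [heq]
      refine le_trans (measure_mono ?_) (htail _ htk0)
      intro ω hω
      exact hω.2
    have hterm : ∀ k : Fin d → ℤ,
        c₁ * Real.exp (-((max r (dist (intVec k) x - 1)) ^ δ) / c₁) ≤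
          (c₁ * Real.exp (-(r ^ δ) / (2 * c₁))) *
            Real.exp (-((max 0 (dist (intVec k) x - 1)) ^ δ) / (2 * c₁)) := by
      intro k
      set t : ℝ := max r (dist (intVec k) x - 1) with ht
      set s : ℝ := max 0 (dist (intVec k) x - 1) with hs
      have hs0 : 0 ≤ s := le_max_left _ _
      have hts : s ≤ t := max_le_max hr.le le_rfl
      have htr : r ≤ t := le_max_left _ _
      have h1 : r ^ δ ≤ t ^ δ := Real.rpow_le_rpow hr.le htr hδ.le
      have h2 : s ^ δ ≤ t ^ δ := Real.rpow_le_rpow hs0 hts hδ.le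
      have hexp : -(t ^ δ) / c₁ ≤ -(r ^ δ) / (2 * c₁) + -(s ^ δ) / (2 * c₁) := by
        rw [← add_div, div_le_div_iff₀ hc₁ h2c₁]
        nlinarith
      calc c₁ * Real.exp (-(t ^ δ) / c₁)
          ≤ c₁ * (Real.exp (-(r ^ δ) / (2 * c₁)) * Real.exp (-(s ^ δ) / (2 * c₁))) := by
            apply mul_le_mul_of_nonneg_left _ hc₁.le
            rw [← Real.exp_add]
            exact Real.exp_le_exp.mpr hexp
      _ = (c₁ * Real.exp (-(r ^ δ) / (2 * c₁))) * Real.exp (-(s ^ δ) / (2 * c₁)) := by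
            ring
    have hfinal : c₁ * Real.exp (-(r ^ δ) / (2 * c₁)) * C ≤
        c₃ * Real.exp (-(r ^ δ) / c₃) := by
      have h1 : c₁ * C ≤ c₃ := le_max_right _ _
      have h2 : Real.exp (-(r ^ δ) / (2 * c₁)) ≤ Real.exp (-(r ^ δ) / c₃) := by
        apply Real.exp_le_exp.mpr
        rw [neg_div, neg_div, neg_le_neg_iff]
        exact div_le_div_of_nonneg_left (Real.rpow_nonneg hr.le _) h2c₁
          (le_max_left _ _)
      calc c₁ * Real.exp (-(r ^ δ) / (2 * c₁)) * C
          = (c₁ * C) * Real.exp (-(r ^ δ) / (2 * c₁)) := by ring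
      _ ≤ c₃ * Real.exp (-(r ^ δ) / c₃) :=
          mul_le_mul h1 h2 (Real.exp_nonneg _) hc₃pos.le
    -- put everything together
    calc P EV ≤ P (EV ∩ {ω | LocFinite (Ψ ω)}) := hsplit
    _ ≤ P (⋃ k : Fin d → ℤ, H k) := measure_mono hincl
    _ ≤ ∑' k : Fin d → ℤ, P (H k) := measure_iUnion_le _
    _ ≤ ∑' k : Fin d → ℤ, ENNReal.ofReal (c₁ *
          Real.exp (-((max r (dist (intVec k) x - 1)) ^ δ) / c₁)) :=
        ENNReal.tsum_le_tsum fun k => hstep k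
    _ ≤ ∑' k : Fin d → ℤ, ENNReal.ofReal (c₁ * Real.exp (-(r ^ δ) / (2 * c₁))) *
          ENNReal.ofReal (Real.exp (-((max 0 (dist (intVec k) x - 1)) ^ δ) / (2 * c₁))) := by
        refine ENNReal.tsum_le_tsum fun k => ?_
        rw [← ENNReal.ofReal_mul (by positivity)]
        exact ENNReal.ofReal_le_ofReal (hterm k)
    _ = ENNReal.ofReal (c₁ * Real.exp (-(r ^ δ) / (2 * c₁))) *
          ∑' k : Fin d → ℤ, ENNReal.ofReal
            (Real.exp (-((max 0 (dist (intVec k) x - 1)) ^ δ) / (2 * c₁))) :=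
        ENNReal.tsum_mul_left
    _ ≤ ENNReal.ofReal (c₁ * Real.exp (-(r ^ δ) / (2 * c₁))) * ENNReal.ofReal C :=
        mul_le_mul_right (hCb x) _
    _ = ENNReal.ofReal (c₁ * Real.exp (-(r ^ δ) / (2 * c₁)) * C) := by
        rw [← ENNReal.ofReal_mul (by positivity)]
    _ ≤ ENNReal.ofReal (c₃ * Real.exp (-(r ^ δ) / c₃)) :=
        ENNReal.ofReal_le_ofReal hfinal

end
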